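/- Let G ∈ SO(I_d) be an isometry of the hyperboloid model of d-dimensional hyperbolic space, where I_d(x,y) = ∑_{i=1}^d x_i y_i − x_{d+1} y_{d+1}. Then the Euclidean operator norm of G as an element of Hom(ℝ^{d+1}, ℝ^{d+1}) satisfies ‖G‖ ≥ e^{d(o, G·o)}, where o = (0,…,0,1) and d is the hyperbolic distance given by cosh d(x,y) = −I_d(x,y). -/

import Mathlib

open scoped BigOperators
open scoped RealInnerProductSpace

/-- The Lorentz form `I_d(x,y) = ∑_{i=1}^d x_i y_i − x_{d+1} y_{d+1}` on `ℝ^{d+1}`. -/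
def lorentzForm (d : ℕ) (x y : EuclideanSpace ℝ (Fin (d + 1))) : ℝ :=
  (∑ i : Fin d, x i.castSucc * y i.castSucc) - x (Fin.last d) * y (Fin.last d)

lemma lorentz_eq_inner (d : ℕ) (x y : EuclideanSpace ℝ (Fin (d + 1))) :
    lorentzForm d x y = ⟪x, y⟫ - 2 * (x (Fin.last d) * y (Fin.last d)) := by
  simp only [lorentzForm, PiLp.inner_apply, RCLike.inner_apply, starRingEnd_apply, star_trivial]
  rw [Fin.sum_univ_castSucc]
  simp only [mul_comm (y.ofLp _) (x.ofLp _)]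
  ring

set_option maxHeartbeats 1000000 in
/-- Let `G` be an isometry of the hyperboloid model of `d`-dimensional
hyperbolic space, i.e. a linear map of `ℝ^{d+1}` preserving the Lorentz form `I_d` (and
preserving the upper sheet containing `o = (0,…,0,1)`). If `ρ ≥ 0` is the hyperbolic distance
from `o` to `G·o`, characterized by `cosh ρ = −I_d(o, G·o)`, then the Euclidean operator norm
of `G` satisfies `‖G‖ ≥ e^ρ = e^{d(o, G·o)}`. -/
theorem lorentz_isometry_norm_lower_bound (d : ℕ)
    (G : EuclideanSpace ℝ (Fin (d + 1)) →L[ℝ] EuclideanSpace ℝ (Fin (d + 1)))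
    (hpres : ∀ x y, lorentzForm d (G x) (G y) = lorentzForm d x y)
    (horient : 0 < G (EuclideanSpace.single (Fin.last d) 1) (Fin.last d))
    (ρ : ℝ) (hρ : 0 ≤ ρ)
    (hdist : Real.cosh ρ =
      - lorentzForm d (EuclideanSpace.single (Fin.last d) 1)
          (G (EuclideanSpace.single (Fin.last d) 1))) :
    Real.exp ρ ≤ ‖G‖ := by
  classical
  set l : Fin (d + 1) := Fin.last d with hl
  set o : EuclideanSpace ℝ (Fin (d + 1)) := EuclideanSpace.single l 1 with ho
  obtain ⟨c, hc⟩ : ∃ c', Real.cosh ρ = c' := ⟨_, rfl⟩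
  obtain ⟨s, hs⟩ : ∃ s', Real.sinh ρ = s' := ⟨_, rfl⟩
  rw [hc] at hdist
  have hcs : c ^ 2 - s ^ 2 = 1 := by
    rw [← hc, ← hs]; exact Real.cosh_sq_sub_sinh_sq ρ
  have hexp : Real.exp ρ = c + s := by
    rw [← hc, ← hs, Real.cosh_add_sinh]
  have hinner_o : ∀ x : EuclideanSpace ℝ (Fin (d + 1)), ⟪x, o⟫ = x l := by
    intro x
    rw [ho, EuclideanSpace.inner_single_right]
    simp
  have hinner_o' : ∀ x : EuclideanSpace ℝ (Fin (d + 1)), ⟪o, x⟫ = x l := by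
    intro x; rw [real_inner_comm]; exact hinner_o x
  have hol : o l = 1 := by simp [ho, EuclideanSpace.single_apply]
  have hoo : ⟪o, o⟫ = (1 : ℝ) := by rw [hinner_o, hol]
  have hform : ∀ x y : EuclideanSpace ℝ (Fin (d + 1)),
      lorentzForm d x y = ⟪x, y⟫ - 2 * (x l * y l) :=
    fun x y => lorentz_eq_inner d x y
  have hnormsq : ∀ z : EuclideanSpace ℝ (Fin (d + 1)),
      ‖z‖ ^ 2 = lorentzForm d z z + 2 * (z l) ^ 2 := by
    intro z
    rw [hform, ← real_inner_self_eq_norm_sq]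
    ring
  -- (G o) l = cosh ρ
  have hGol : G o l = c := by
    rw [hdist, hform, hinner_o', hol]; ring
  -- adjoint
  set A := ContinuousLinearMap.adjoint G with hA
  have hAdj : ∀ z x : EuclideanSpace ℝ (Fin (d + 1)), ⟪A z, x⟫ = ⟪z, G x⟫ :=
    fun z x => ContinuousLinearMap.adjoint_inner_left G x z
  set r : EuclideanSpace ℝ (Fin (d + 1)) := A o with hr
  have hrx : ∀ x, ⟪r, x⟫ = G x l := by
    intro x; rw [hr, hAdj, hinner_o']
  have hrl : r l = c := by
    rw [← hinner_o r, hrx, hGol]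
  -- the reflection x ↦ x - 2 x_l • o
  set R : EuclideanSpace ℝ (Fin (d + 1)) → EuclideanSpace ℝ (Fin (d + 1)) :=
    fun x => x - (2 * x l) • o with hR
  have hRl : ∀ x, (R x) l = - x l := by
    intro x
    simp only [hR, PiLp.sub_apply, PiLp.smul_apply, smul_eq_mul, hol]
    ring
  have hRinner : ∀ x y, ⟪R x, y⟫ = ⟪x, y⟫ - 2 * (x l * y l) := by
    intro x y
    simp only [hR, inner_sub_left, real_inner_smul_left]
    rw [hinner_o']
    ring
  have hRR : ∀ x, R (R x) = x := by
    intro x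
    show R x - (2 * (R x) l) • o = x
    rw [hRl]
    show x - (2 * x l) • o - (2 * -x l) • o = x
    module
  -- A ∘ R ∘ G = R
  have hA_R : ∀ y, A (R (G y)) = R y := by
    intro y
    apply ext_inner_right ℝ
    intro x
    rw [hAdj, hRinner, hRinner]
    have h := hpres y x
    rw [hform, hform] at h
    linarith
  -- G is bijective
  have hinj : Function.Injective G := by
    intro a b hab
    have h1 : A (R (G a)) = A (R (G b)) := by rw [hab]
    rw [hA_R, hA_R] at h1
    have h2 := congrArg R h1
    rwa [hRR, hRR] at h2
  have hsurj : Function.Surjective G := by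
    have h := (LinearMap.injective_iff_surjective
      (f := (G : EuclideanSpace ℝ (Fin (d + 1)) →ₗ[ℝ] EuclideanSpace ℝ (Fin (d + 1))))).mp hinj
    exact h
  -- row relation : ⟪r, r⟫ = 2 c² - 1
  obtain ⟨y, hy⟩ := hsurj (-o)
  have hnol : (-o : EuclideanSpace ℝ (Fin (d + 1))) l = -1 := by
    simp only [PiLp.neg_apply, hol]
  have hRo : R (-o) = o := by
    show -o - (2 * (-o) l) • o = o
    rw [hnol]
    module
  have hry : r = R y := by
    have h := hA_R y
    rw [hy, hRo] at h
    exact h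
  have hyl : y l = - c := by
    have h : r l = - y l := by rw [hry, hRl]
    rw [hrl] at h; linarith
  have hyy : ⟪y, y⟫ = 2 * c ^ 2 - 1 := by
    have h := hpres y y
    rw [hy, hform, hform] at h
    have hno : ⟪(-o : EuclideanSpace ℝ (Fin (d + 1))), -o⟫ = (1 : ℝ) := by
      rw [inner_neg_neg, hoo]
    rw [hno, hnol, hyl] at h
    linear_combination -h
  have hrr : ⟪r, r⟫ = 2 * c ^ 2 - 1 := by
    have h1 : ⟪r, r⟫ = ⟪y, y⟫ := by
      rw [hry]
      rw [hRinner, real_inner_comm (R y) y, hRinner, hRl]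
      ring
    rw [h1, hyy]
  -- the witness vector u = r + (s - c) • o
  set u : EuclideanSpace ℝ (Fin (d + 1)) := r + (s - c) • o with hu
  have hru : ⟪r, u⟫ = s * (s + c) := by
    rw [hu, inner_add_right, real_inner_smul_right, hinner_o, hrl, hrr]
    linear_combination hcs
  have huu : ⟪u, u⟫ = 2 * s ^ 2 := by
    rw [hu, real_inner_add_add_self, real_inner_smul_right, real_inner_smul_left,
      real_inner_smul_right, hinner_o, hrl, hoo, hrr]
    linear_combination hcs
  have hul : u l = s := by
    rw [hu]
    simp only [PiLp.add_apply, PiLp.smul_apply, smul_eq_mul, hrl, hol]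
    ring
  have hGul : G u l = s * (s + c) := by
    rw [← hrx u, hru]
  have hunorm : ‖u‖ ^ 2 = 2 * s ^ 2 := by
    rw [← real_inner_self_eq_norm_sq, huu]
  have hGunorm : ‖G u‖ ^ 2 = (Real.exp ρ) ^ 2 * ‖u‖ ^ 2 := by
    rw [hnormsq (G u), hpres u u, hform u u, huu, hul, hGul, hunorm, hexp]
    ring
  by_cases hs0 : s = 0
  · -- ρ = 0
    have hρ0 : ρ = 0 := by
      have : Real.sinh ρ = 0 := by rw [hs, hs0]
      exact Real.sinh_eq_zero.mp this
    have hc1 : c = 1 := by rw [← hc, hρ0, Real.cosh_zero]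
    rw [hρ0, Real.exp_zero]
    have h1 : ‖G o‖ ^ 2 = 1 := by
      rw [hnormsq (G o), hpres o o, hform o o, hoo, hol, hGol, hc1]
      ring
    have h2 : ‖o‖ ^ 2 = 1 := by
      rw [← real_inner_self_eq_norm_sq, hoo]
    have h3 := G.le_opNorm o
    have ho1 : ‖o‖ = 1 := by
      rw [← Real.sqrt_sq (norm_nonneg o), h2, Real.sqrt_one]
    have hGo1 : ‖G o‖ = 1 := by
      rw [← Real.sqrt_sq (norm_nonneg (G o)), h1, Real.sqrt_one]
    rw [ho1, hGo1, mul_one] at h3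
    exact h3
  · have hspos : 0 < s := by
      have h0 : 0 ≤ s := by rw [← hs]; exact Real.sinh_nonneg_iff.mpr hρ
      exact lt_of_le_of_ne h0 (Ne.symm hs0)
    have hupos : 0 < ‖u‖ := by
      have h0 : 0 < ‖u‖ ^ 2 := by rw [hunorm]; positivity
      nlinarith [norm_nonneg u]
    have hle := G.le_opNorm u
    have hsq : (Real.exp ρ * ‖u‖) ^ 2 ≤ (‖G‖ * ‖u‖) ^ 2 := by
      calc (Real.exp ρ * ‖u‖) ^ 2 = ‖G u‖ ^ 2 := by rw [hGunorm]; ring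
        _ ≤ (‖G‖ * ‖u‖) ^ 2 := pow_le_pow_left₀ (norm_nonneg (G u)) hle 2
    have hmul : Real.exp ρ * ‖u‖ ≤ ‖G‖ * ‖u‖ :=
      le_of_pow_le_pow_left₀ two_ne_zero (by positivity) hsq
    exact le_of_mul_le_mul_right hmul hupos
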